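/- Let f be analytic on the unit disc with |f(z)| ≤ 1 for all |z| < 1, and write f(z) = ∑_{n≥0} a_n z^n. Then for every n ≥ 1, |a_n| ≤ 1 - |a_0|^2. -/

import Mathlib

open Metric Complex

/-- Power series representation on the unit ball. -/
lemma myHasFPSeries (g : ℂ → ℂ) (b : ℕ → ℂ)
    (hg : ∀ z ∈ Metric.ball (0 : ℂ) 1, HasSum (fun m => b m * z ^ m) (g z)) :
    HasFPowerSeriesOnBall g (FormalMultilinearSeries.ofScalars ℂ b) 0 1 := by
  constructor
  · refine ENNReal.le_of_forall_nnreal_lt fun r hr => ?_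
    have hr1 : (r : ℝ) < 1 := by exact_mod_cast hr
    have hz : ((r : ℝ) : ℂ) ∈ Metric.ball (0 : ℂ) 1 := by
      simp [_root_.abs_of_nonneg r.coe_nonneg, hr1]
    have hs := (hg _ hz).summable
    have ht : Filter.Tendsto (fun n => ‖b n * ((r : ℝ) : ℂ) ^ n‖) Filter.atTop (nhds 0) := by
      simpa using hs.tendsto_atTop_zero.norm
    apply FormalMultilinearSeries.le_radius_of_tendsto _ (l := 0)
    refine ht.congr fun n => ?_
    rw [FormalMultilinearSeries.ofScalars_norm, norm_mul, norm_pow]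
    simp [Complex.norm_real, _root_.abs_of_nonneg r.coe_nonneg]
  · exact one_pos
  · intro y hy
    have hy' : y ∈ Metric.ball (0 : ℂ) 1 := by
      rwa [← ENNReal.coe_one, Metric.eball_coe, NNReal.coe_one] at hy
    have := hg y hy'
    simp only [zero_add]
    refine this.congr_fun fun n => ?_
    rw [FormalMultilinearSeries.ofScalars_apply_eq]
    simp [mul_comm]

lemma moebius_abs_lt (c w : ℂ) (hc : ‖c‖ < 1) (hw : ‖w‖ < 1) :
    ‖(w - c) / (1 - (starRingEnd ℂ) c * w)‖ < 1 := by
  have hc2 : Complex.normSq c < 1 := by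
    rw [Complex.normSq_eq_norm_sq]
    exact pow_lt_one₀ (norm_nonneg _) hc two_ne_zero
  have hw2 : Complex.normSq w < 1 := by
    rw [Complex.normSq_eq_norm_sq]
    exact pow_lt_one₀ (norm_nonneg _) hw two_ne_zero
  have hkey : Complex.normSq (1 - (starRingEnd ℂ) c * w) - Complex.normSq (w - c)
      = (1 - Complex.normSq c) * (1 - Complex.normSq w) := by
    simp only [Complex.normSq_apply, Complex.sub_re, Complex.sub_im, Complex.mul_re,
      Complex.mul_im, Complex.one_re, Complex.one_im, Complex.conj_re, Complex.conj_im]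
    ring
  have hlt : Complex.normSq (w - c) < Complex.normSq (1 - (starRingEnd ℂ) c * w) := by
    nlinarith
  have hne : (1 : ℂ) - (starRingEnd ℂ) c * w ≠ 0 := by
    intro h
    rw [h] at hlt
    simp at hlt
    nlinarith [Complex.normSq_nonneg (w - c)]
  rw [norm_div, div_lt_one (norm_pos_iff.mpr hne)]
  refine lt_of_pow_lt_pow_left₀ 2 (norm_nonneg _) ?_
  rw [Complex.sq_norm, Complex.sq_norm]
  exact hlt

lemma base_bound (g : ℂ → ℂ) (b : ℕ → ℂ)
    (hg : ∀ z ∈ Metric.ball (0 : ℂ) 1, HasSum (fun m => b m * z ^ m) (g z))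
    (hbd : ∀ z ∈ Metric.ball (0 : ℂ) 1, ‖g z‖ ≤ 1) :
    ‖b 1‖ ≤ 1 - (‖b 0‖) ^ 2 := by
  have hps := myHasFPSeries g b hg
  have hball : Metric.eball (0 : ℂ) 1 = ball (0 : ℂ) 1 := by
    rw [← ENNReal.coe_one, Metric.emetric_ball_nnreal, NNReal.coe_one]
  have hdiff : DifferentiableOn ℂ g (ball (0 : ℂ) 1) := hball ▸ hps.differentiableOn
  have h0mem : (0 : ℂ) ∈ ball (0 : ℂ) 1 := by simp
  have g0 : g 0 = b 0 := by
    have h1 : HasSum (fun m => b m * (0 : ℂ) ^ m) (b 0 * (0 : ℂ) ^ 0) :=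
      hasSum_single 0 (fun m hm => by simp [zero_pow hm])
    have := (hg 0 h0mem).unique h1
    simpa using this
  have hd1 : deriv g 0 = b 1 := by
    rw [hps.hasFPowerSeriesAt.deriv]
    show (FormalMultilinearSeries.ofScalars ℂ b) 1 (fun _ => 1) = b 1
    rw [FormalMultilinearSeries.ofScalars_apply_eq]
    simp
  have hb0 : ‖b 0‖ ≤ 1 := g0 ▸ hbd 0 h0mem
  -- main quantitative step
  have key : ∀ t : ℝ, 0 < t → t < 1 →
      t * ‖b 1‖ ≤ 1 - t ^ 2 * ‖b 0‖ ^ 2 := by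
    intro t ht0 ht1
    set c : ℂ := (t : ℂ) * b 0 with hc_def
    have hc : ‖c‖ < 1 := by
      have : ‖c‖ = t * ‖b 0‖ := by
        simp [hc_def, map_mul, Complex.norm_real, abs_of_pos ht0]
      rw [this]
      calc t * ‖b 0‖ ≤ t * 1 := by
            exact mul_le_mul_of_nonneg_left hb0 ht0.le
        _ < 1 := by linarith
    set u : ℂ → ℂ := fun z => (t : ℂ) * g z with hu_def
    have hu_lt : ∀ z ∈ ball (0 : ℂ) 1, ‖u z‖ < 1 := by
      intro z hz
      have : ‖u z‖ = t * ‖g z‖ := by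
        simp [hu_def, map_mul, Complex.norm_real, abs_of_pos ht0]
      rw [this]
      calc t * ‖g z‖ ≤ t * 1 := mul_le_mul_of_nonneg_left (hbd z hz) ht0.le
        _ < 1 := by linarith
    have hu0 : u 0 = c := by
      show (t : ℂ) * g 0 = (t : ℂ) * b 0
      rw [g0]
    set h : ℂ → ℂ := fun z => (u z - c) / (1 - (starRingEnd ℂ) c * u z) with hh_def
    have hlt : ∀ z ∈ ball (0 : ℂ) 1, ‖h z‖ < 1 := fun z hz =>
      moebius_abs_lt c (u z) hc (hu_lt z hz)
    have hden : ∀ z ∈ ball (0 : ℂ) 1, (1 : ℂ) - (starRingEnd ℂ) c * u z ≠ 0 := by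
      intro z hz heq
      have h1 : ‖(starRingEnd ℂ) c * u z‖ < 1 := by
        rw [norm_mul, Complex.norm_conj]
        calc ‖c‖ * ‖u z‖ ≤ ‖c‖ * 1 :=
              mul_le_mul_of_nonneg_left (hu_lt z hz).le (norm_nonneg _)
          _ < 1 := by linarith
      have : (1 : ℂ) = (starRingEnd ℂ) c * u z := by linear_combination heq
      rw [← this] at h1
      simp at h1
    have hudiff : DifferentiableOn ℂ u (ball (0 : ℂ) 1) := hdiff.const_mul _
    have hhdiff : DifferentiableOn ℂ h (ball (0 : ℂ) 1) := by
      apply DifferentiableOn.div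
      · exact hudiff.sub_const c
      · exact (differentiableOn_const _).sub (hudiff.const_mul _)
      · exact hden
    have hh0 : h 0 = 0 := by
      show (u 0 - c) / (1 - (starRingEnd ℂ) c * u 0) = 0
      rw [hu0, sub_self, zero_div]
    have hmaps : Set.MapsTo h (ball (0 : ℂ) 1) (ball (h 0) 1) := by
      intro z hz
      rw [hh0, mem_ball, dist_zero_right]
      exact hlt z hz
    have hschwarz : ‖deriv h 0‖ ≤ 1 / 1 :=
      Complex.norm_deriv_le_div_of_mapsTo_ball hhdiff (hmaps.mono_right ball_subset_closedBall) one_pos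
    -- compute deriv h 0
    have hgd : HasDerivAt g (b 1) 0 := by
      have := (hdiff.differentiableAt (isOpen_ball.mem_nhds h0mem)).hasDerivAt
      rwa [hd1] at this
    have hud : HasDerivAt u ((t : ℂ) * b 1) 0 := hgd.const_mul _
    have hnum : HasDerivAt (fun z => u z - c) ((t : ℂ) * b 1) 0 := hud.sub_const c
    have hdend : HasDerivAt (fun z => (1 : ℂ) - (starRingEnd ℂ) c * u z)
        (-((starRingEnd ℂ) c * ((t : ℂ) * b 1))) 0 := (hud.const_mul _).const_sub 1
    have hD0 : (1 : ℂ) - (starRingEnd ℂ) c * u 0 ≠ 0 := hden 0 h0mem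
    have hderiv : HasDerivAt h
        (((t : ℂ) * b 1 * (1 - (starRingEnd ℂ) c * u 0) -
          (u 0 - c) * -((starRingEnd ℂ) c * ((t : ℂ) * b 1))) /
          (1 - (starRingEnd ℂ) c * u 0) ^ 2) 0 := hnum.div hdend hD0
    have hD : (1 : ℂ) - (starRingEnd ℂ) c * c ≠ 0 := by
      have := hD0; rwa [hu0] at this
    have hderiv_eq : deriv h 0 = (t : ℂ) * b 1 / (1 - (starRingEnd ℂ) c * c) := by
      rw [hderiv.deriv, hu0, sub_self, zero_mul, sub_zero, sq,
        mul_div_mul_right _ _ hD]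
    rw [hderiv_eq] at hschwarz
    have hD0' : (1 : ℂ) - (starRingEnd ℂ) c * c = ((1 - Complex.normSq c : ℝ) : ℂ) := by
      rw [mul_comm, Complex.mul_conj]
      push_cast
      ring
    have hcn : Complex.normSq c < 1 := by
      rw [Complex.normSq_eq_norm_sq]
      exact pow_lt_one₀ (norm_nonneg _) hc two_ne_zero
    have habsD : ‖1 - (starRingEnd ℂ) c * c‖ = 1 - Complex.normSq c := by
      rw [hD0', Complex.norm_real, Real.norm_eq_abs, abs_of_pos]
      linarith
    have hDpos : 0 < ‖1 - (starRingEnd ℂ) c * c‖ := norm_pos_iff.mpr hD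
    have hschwarz' : ‖(t : ℂ) * b 1‖ /
        ‖1 - (starRingEnd ℂ) c * c‖ ≤ 1 := by
      simpa [map_div₀] using hschwarz
    rw [div_le_one hDpos] at hschwarz'
    have hfinal : ‖(t : ℂ) * b 1‖ ≤ 1 - Complex.normSq c :=
      hschwarz'.trans_eq habsD
    have e1 : ‖(t : ℂ) * b 1‖ = t * ‖b 1‖ := by
      simp [map_mul, Complex.norm_real, abs_of_pos ht0]
    have e2 : Complex.normSq c = t ^ 2 * ‖b 0‖ ^ 2 := by
      rw [Complex.normSq_eq_norm_sq]
      simp [hc_def, map_mul, Complex.norm_real, abs_of_pos ht0, mul_pow]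
    rw [e1, e2] at hfinal
    exact hfinal
  -- take the limit t → 1⁻
  have hT : Filter.Tendsto (fun t : ℝ => t * ‖b 1‖) (nhdsWithin 1 (Set.Iio 1))
      (nhds (‖b 1‖)) := by
    have : Filter.Tendsto (fun t : ℝ => t * ‖b 1‖) (nhds 1)
        (nhds (1 * ‖b 1‖)) := (continuous_id.mul continuous_const).tendsto 1
    simpa using this.mono_left nhdsWithin_le_nhds
  have hT2 : Filter.Tendsto (fun t : ℝ => 1 - t ^ 2 * ‖b 0‖ ^ 2)
      (nhdsWithin 1 (Set.Iio 1)) (nhds (1 - ‖b 0‖ ^ 2)) := by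
    have : Filter.Tendsto (fun t : ℝ => 1 - t ^ 2 * ‖b 0‖ ^ 2) (nhds 1)
        (nhds (1 - 1 ^ 2 * ‖b 0‖ ^ 2)) := by
      apply Filter.Tendsto.sub tendsto_const_nhds
      exact ((continuous_pow 2).mul continuous_const).tendsto 1
    simpa using this.mono_left nhdsWithin_le_nhds
  refine le_of_tendsto_of_tendsto hT hT2 ?_
  filter_upwards [Ioo_mem_nhdsLT_of_mem (by constructor <;> norm_num :
    (1 : ℝ) ∈ Set.Ioc (0 : ℝ) 1)] with t ht
  exact key t ht.1 ht.2

theorem bohr_coeff_bound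
    (f : ℂ → ℂ) (a : ℕ → ℂ)
    (hf : ∀ z ∈ Metric.ball (0 : ℂ) 1, HasSum (fun n => a n * z ^ n) (f z))
    (hb : ∀ z ∈ Metric.ball (0 : ℂ) 1, ‖f z‖ ≤ 1) :
    ∀ n : ℕ, 1 ≤ n → ‖a n‖ ≤ 1 - ‖a 0‖ ^ 2 := by
  intro n hn
  have hn0 : n ≠ 0 := by omega
  have hnpos : 0 < n := Nat.pos_of_ne_zero hn0
  set ω : ℂ := Complex.exp (2 * Real.pi * Complex.I / n) with hω
  have hprim : IsPrimitiveRoot ω n := Complex.isPrimitiveRoot_exp n hn0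
  have hωabs : ‖ω‖ = 1 := by
    have harg : (2 * (Real.pi : ℂ) * Complex.I / n) = ((2 * Real.pi / n : ℝ) : ℂ) * Complex.I := by
      push_cast; ring
    rw [hω, harg, Complex.norm_exp_ofReal_mul_I]
  set G : ℂ → ℂ := fun w => ∑' m, a (n * m) * w ^ m with hG_def
  have main : ∀ w ∈ ball (0 : ℂ) 1,
      ∃ S : ℂ, HasSum (fun m => a (n * m) * w ^ m) S ∧ ‖S‖ ≤ 1 := by
    intro w hw
    obtain ⟨ζ, hζ⟩ := IsAlgClosed.exists_pow_nat_eq w hnpos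
    have hwabs : ‖w‖ < 1 := by simpa using hw
    have hζabs : ‖ζ‖ < 1 := by
      by_contra hcon
      push_neg at hcon
      have : (1 : ℝ) ≤ ‖ζ‖ ^ n := one_le_pow₀ hcon
      rw [← norm_pow, hζ] at this
      linarith
    have hmem : ∀ k : ℕ, ω ^ k * ζ ∈ ball (0 : ℂ) 1 := by
      intro k
      simp only [mem_ball, dist_zero_right, norm_mul, norm_pow, hωabs,
        one_pow, one_mul]
      exact hζabs
    set S : ℂ := (n : ℂ)⁻¹ * ∑ k ∈ Finset.range n, f (ω ^ k * ζ) with hS_def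
    refine ⟨S, ?_, ?_⟩
    · -- HasSum
      have h2 : HasSum (fun j => ∑ k ∈ Finset.range n, a j * (ω ^ k * ζ) ^ j)
          (∑ k ∈ Finset.range n, f (ω ^ k * ζ)) :=
        hasSum_sum fun k _ => hf _ (hmem k)
      have h3 : HasSum (fun j => (n : ℂ)⁻¹ * ∑ k ∈ Finset.range n, a j * (ω ^ k * ζ) ^ j) S :=
        h2.mul_left _
      have h4 : ∀ j : ℕ, (n : ℂ)⁻¹ * ∑ k ∈ Finset.range n, a j * (ω ^ k * ζ) ^ j
          = if n ∣ j then a j * ζ ^ j else 0 := by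
        intro j
        have hterm : ∀ k, a j * (ω ^ k * ζ) ^ j = a j * ζ ^ j * (ω ^ j) ^ k := by
          intro k
          rw [mul_pow, ← pow_mul, mul_comm k j, pow_mul]
          ring
        rw [Finset.sum_congr rfl fun k _ => hterm k, ← Finset.mul_sum]
        by_cases hdvd : n ∣ j
        · have hone : ω ^ j = 1 := hprim.pow_eq_one_iff_dvd j |>.mpr hdvd
          rw [if_pos hdvd, hone]
          simp only [one_pow, Finset.sum_const, Finset.card_range, nsmul_eq_mul, mul_one]
          have : (n : ℂ) ≠ 0 := Nat.cast_ne_zero.mpr hn0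
          field_simp
        · have hne1 : ω ^ j ≠ 1 := fun h => hdvd ((hprim.pow_eq_one_iff_dvd j).mp h)
          have hsum0 : ∑ k ∈ Finset.range n, (ω ^ j) ^ k = 0 := by
            have hgeom : (∑ k ∈ Finset.range n, (ω ^ j) ^ k) * (ω ^ j - 1)
                = (ω ^ j) ^ n - 1 := geom_sum_mul _ _
            have hpow : (ω ^ j) ^ n = 1 := by
              rw [← pow_mul, mul_comm j n, pow_mul, hprim.pow_eq_one, one_pow]
            rw [hpow, sub_self] at hgeom
            rcases mul_eq_zero.mp hgeom with h | h
            · exact h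
            · exact absurd (sub_eq_zero.mp h) hne1
          rw [if_neg hdvd, hsum0, mul_zero, mul_zero]
      have h5 : HasSum (fun j => if n ∣ j then a j * ζ ^ j else 0) S :=
        h3.congr_fun fun j => (h4 j).symm
      have hinj : Function.Injective (fun m : ℕ => n * m) := fun x y h => by
        exact Nat.eq_of_mul_eq_mul_left hnpos h
      have hvanish : ∀ j, j ∉ Set.range (fun m : ℕ => n * m) →
          (if n ∣ j then a j * ζ ^ j else 0) = 0 := by
        intro j hj
        rw [if_neg]
        rintro ⟨m, rfl⟩
        exact hj ⟨m, rfl⟩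
      have h6 := (Function.Injective.hasSum_iff hinj hvanish).mpr h5
      refine h6.congr_fun fun m => ?_
      show a (n * m) * w ^ m = if n ∣ n * m then a (n * m) * ζ ^ (n * m) else 0
      rw [if_pos (dvd_mul_right n m), pow_mul, hζ]
    · -- bound
      rw [hS_def, norm_mul, norm_inv, Complex.norm_natCast]
      have hsb : ‖∑ k ∈ Finset.range n, f (ω ^ k * ζ)‖ ≤ n := by
        calc ‖∑ k ∈ Finset.range n, f (ω ^ k * ζ)‖
            ≤ ∑ k ∈ Finset.range n, ‖f (ω ^ k * ζ)‖ := by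
              exact norm_sum_le _ _
          _ ≤ ∑ k ∈ Finset.range n, 1 := Finset.sum_le_sum fun k _ => hb _ (hmem k)
          _ = n := by simp
      calc (n : ℝ)⁻¹ * ‖∑ k ∈ Finset.range n, f (ω ^ k * ζ)‖
          ≤ (n : ℝ)⁻¹ * n := by
            apply mul_le_mul_of_nonneg_left hsb
            positivity
        _ = 1 := by
            field_simp
  have hGsum : ∀ w ∈ ball (0 : ℂ) 1, HasSum (fun m => a (n * m) * w ^ m) (G w) := by
    intro w hw
    obtain ⟨S, hS, _⟩ := main w hw
    have hGw : G w = S := hS.tsum_eq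
    rw [hGw]
    exact hS
  have hGbd : ∀ w ∈ ball (0 : ℂ) 1, ‖G w‖ ≤ 1 := by
    intro w hw
    obtain ⟨S, hS, hSb⟩ := main w hw
    have hGw : G w = S := hS.tsum_eq
    rw [hGw]
    exact hSb
  have hres := base_bound G (fun m => a (n * m)) hGsum hGbd
  simpa using hres
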